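/- arXiv:1111.5993 — 3 statements merged into one kernel-verified Lean document; each statement's English description precedes it below -/
import Mathlib

section
/- The full latent-variable household model with one age category is identifiable: if (p_A, q_A), (p_B, q_B) ∈ (0,1]² induce the same distribution of the respondent's reported contact count W for every household size n ≥ 2 (where W | R=1 is distributed as the number of successes among H at-home members each contacted with probability q, H ~ Binomial(n−1, p), and W = 0 when R = 0, R ~ Bernoulli(p)), then p_A = p_B and q_A = q_B. -/
open Finset

/-- Marginal pmf of the respondent's reported contact count `W = w` in a household
of size `n` (so `n - 1` other members) in the single-age-category latent variable
model: the respondent is at home with probability `p` (else `W = 0`), the number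
`H` of other members at home is `Binomial (n-1, p)`, and given `H = h` the count
`W` of contacted members is `Binomial (h, q)`. -/
noncomputable def reportPMF (p q : ℝ) (n w : ℕ) : ℝ :=
  (if w = 0 then 1 - p else 0) +
    p * ∑ h ∈ Finset.range n, (h.choose w : ℝ) * q ^ w * (1 - q) ^ (h - w) *
      ((n - 1).choose h : ℝ) * p ^ h * (1 - p) ^ (n - 1 - h)

lemma reportPMF_21 (p q : ℝ) : reportPMF p q 2 1 = p ^ 2 * q := by
  simp [reportPMF, Finset.sum_range_succ]
  ring

lemma reportPMF_32 (p q : ℝ) : reportPMF p q 3 2 = p ^ 3 * q ^ 2 := by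
  simp [reportPMF, Finset.sum_range_succ]
  ring


/-- Identifiability of the single-age-category latent-variable household model:
if two parameter pairs in `(0,1]²` induce the same distribution of the
respondent's report for every household size `n ≥ 2`, they are equal. -/
theorem single_category_identifiable (pA qA pB qB : ℝ)
    (hpA : pA ∈ Set.Ioc (0 : ℝ) 1) (hqA : qA ∈ Set.Ioc (0 : ℝ) 1)
    (hpB : pB ∈ Set.Ioc (0 : ℝ) 1) (hqB : qB ∈ Set.Ioc (0 : ℝ) 1)
    (h : ∀ n : ℕ, 2 ≤ n → ∀ w : ℕ, reportPMF pA qA n w = reportPMF pB qB n w) :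
    pA = pB ∧ qA = qB := by
  obtain ⟨hpA0, hpA1⟩ := hpA
  obtain ⟨hqA0, hqA1⟩ := hqA
  obtain ⟨hpB0, hpB1⟩ := hpB
  have hA : pA ^ 2 * qA = pB ^ 2 * qB := by
    have := h 2 (by norm_num) 1
    rwa [reportPMF_21, reportPMF_21] at this
  have hB : pA ^ 3 * qA ^ 2 = pB ^ 3 * qB ^ 2 := by
    have := h 3 (by norm_num) 2
    rwa [reportPMF_32, reportPMF_32] at this
  have hBpos : 0 < pA ^ 3 * qA ^ 2 := by positivity
  have hp : pA = pB := by
    have key : pA * (pA ^ 3 * qA ^ 2) = pB * (pA ^ 3 * qA ^ 2) := by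
      calc pA * (pA ^ 3 * qA ^ 2) = (pA ^ 2 * qA) ^ 2 := by ring
        _ = (pB ^ 2 * qB) ^ 2 := by rw [hA]
        _ = pB * (pB ^ 3 * qB ^ 2) := by ring
        _ = pB * (pA ^ 3 * qA ^ 2) := by rw [hB]
    exact mul_right_cancel₀ (ne_of_gt hBpos) key
  refine ⟨hp, ?_⟩
  have hp2 : (0:ℝ) < pB ^ 2 := by positivity
  rw [hp] at hA
  exact mul_left_cancel₀ (ne_of_gt hp2) hA
end

section
/- Identifiability of the two-age-category latent variable model: suppose for parameters (p_1, p_2, q_{11}, q_{22}, q_{12}) ∈ (0,1]^5 the induced distributions of respondent reports agree with those of (p_1', p_2', q_{11}', q_{22}', q_{12}') for the following household types: two members both age 1; three members all age 1; two members both age 2; three members all age 2; and two members of ages 1 and 2 (respondent age 1). Then the two parameter vectors are equal. -/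
open Finset

/-- Pmf of the respondent's reported contact count for a household consisting of
the respondent (at home w.p. `pr`) and `n` other members of a single age
category, each at home independently w.p. `ps` and, given both at home,
contacted independently w.p. `q`: `W = 0` if the respondent is away; otherwise
`W | H = h ~ Binomial (h, q)` with `H ~ Binomial (n, ps)`. -/
noncomputable def repPMF (pr ps q : ℝ) (n w : ℕ) : ℝ :=
  (if w = 0 then 1 - pr else 0) +
    pr * ∑ h ∈ Finset.range (n + 1), (h.choose w : ℝ) * q ^ w * (1 - q) ^ (h - w) *
      ((n.choose h : ℝ) * ps ^ h * (1 - ps) ^ (n - h))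

lemma repPMF_one_one (pr ps q : ℝ) : repPMF pr ps q 1 1 = pr * ps * q := by
  simp only [repPMF, Finset.sum_range_succ, Finset.sum_range_zero]
  norm_num; ring

lemma repPMF_two_two (pr ps q : ℝ) : repPMF pr ps q 2 2 = pr * ps ^ 2 * q ^ 2 := by
  simp only [repPMF, Finset.sum_range_succ, Finset.sum_range_zero]
  norm_num; ring

/-- Key algebraic step: knowing `p² q` and `p³ q²` with positive parameters
determines `p` and `q`. -/
lemma key (p q p' q' : ℝ) (hp : 0 < p) (hq : 0 < q) (hp' : 0 < p') (hq' : 0 < q')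
    (h1 : p * p * q = p' * p' * q') (h2 : p * p ^ 2 * q ^ 2 = p' * p' ^ 2 * q' ^ 2) :
    p = p' ∧ q = q' := by
  have hx : 0 < p * p * q := by positivity
  have hy : p * q = p' * q' := by
    have h2' : (p * p * q) * (p * q) = (p * p * q) * (p' * q') := by
      linear_combination h2 - (p' * q') * h1
    exact mul_left_cancel₀ (ne_of_gt hx) h2'
  have hpq : 0 < p * q := by positivity
  have hpp : p = p' := by
    have : p * (p * q) = p' * (p * q) := by linear_combination h1 - p' * hy
    exact mul_right_cancel₀ (ne_of_gt hpq) this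
  refine ⟨hpp, ?_⟩
  have := hy
  rw [hpp] at this
  exact mul_left_cancel₀ (ne_of_gt hp') this

/-- Identifiability of the two-age-category latent variable model: agreement of
the report distributions for households of two and three members of age 1, two
and three members of age 2, and a mixed two-member household (respondent of
age 1, member of age 2) forces the parameter vectors to coincide. -/
theorem two_category_identifiable
    (p1 p2 q11 q22 q12 p1' p2' q11' q22' q12' : ℝ)
    (hp1 : p1 ∈ Set.Ioc (0 : ℝ) 1) (hp2 : p2 ∈ Set.Ioc (0 : ℝ) 1)
    (hq11 : q11 ∈ Set.Ioc (0 : ℝ) 1) (hq22 : q22 ∈ Set.Ioc (0 : ℝ) 1)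
    (hq12 : q12 ∈ Set.Ioc (0 : ℝ) 1)
    (hp1' : p1' ∈ Set.Ioc (0 : ℝ) 1) (hp2' : p2' ∈ Set.Ioc (0 : ℝ) 1)
    (hq11' : q11' ∈ Set.Ioc (0 : ℝ) 1) (hq22' : q22' ∈ Set.Ioc (0 : ℝ) 1)
    (hq12' : q12' ∈ Set.Ioc (0 : ℝ) 1)
    (h2a : ∀ w, repPMF p1 p1 q11 1 w = repPMF p1' p1' q11' 1 w)
    (h3a : ∀ w, repPMF p1 p1 q11 2 w = repPMF p1' p1' q11' 2 w)
    (h2b : ∀ w, repPMF p2 p2 q22 1 w = repPMF p2' p2' q22' 1 w)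
    (h3b : ∀ w, repPMF p2 p2 q22 2 w = repPMF p2' p2' q22' 2 w)
    (hmix : ∀ w, repPMF p1 p2 q12 1 w = repPMF p1' p2' q12' 1 w) :
    p1 = p1' ∧ p2 = p2' ∧ q11 = q11' ∧ q22 = q22' ∧ q12 = q12' := by
  have e1 := h2a 1; rw [repPMF_one_one, repPMF_one_one] at e1
  have e2 := h3a 2; rw [repPMF_two_two, repPMF_two_two] at e2
  have f1 := h2b 1; rw [repPMF_one_one, repPMF_one_one] at f1
  have f2 := h3b 2; rw [repPMF_two_two, repPMF_two_two] at f2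
  have g1 := hmix 1; rw [repPMF_one_one, repPMF_one_one] at g1
  obtain ⟨hP1, hQ11⟩ := key p1 q11 p1' q11' hp1.1 hq11.1 hp1'.1 hq11'.1 e1 e2
  obtain ⟨hP2, hQ22⟩ := key p2 q22 p2' q22' hp2.1 hq22.1 hp2'.1 hq22'.1 f1 f2
  refine ⟨hP1, hP2, hQ11, hQ22, ?_⟩
  rw [hP1, hP2] at g1
  have h12 : 0 < p1' * p2' := mul_pos hp1'.1 hp2'.1
  exact mul_left_cancel₀ (ne_of_gt h12) (by linear_combination g1)
end

section
/- Suppose (p, q) and (p', q') in (0,1]×(0,1] satisfy 1 − p + p(1−pq)^n = 1 − p' + p'(1−p'q')^n for all n ≥ 1. Then p = p' and q = q'. -/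
open Filter Topology

lemma tendsto_aux (p q : ℝ) (hp : p ∈ Set.Ioc (0 : ℝ) 1) (hq : q ∈ Set.Ioc (0 : ℝ) 1) :
    Tendsto (fun n : ℕ => 1 - p + p * (1 - p * q) ^ n) atTop (𝓝 (1 - p)) := by
  obtain ⟨hp0, hp1⟩ := hp
  obtain ⟨hq0, hq1⟩ := hq
  have hpq1 : p * q ≤ 1 := by nlinarith
  have hpq0 : 0 < p * q := mul_pos hp0 hq0
  have habs : |1 - p * q| < 1 := by rw [abs_lt]; constructor <;> linarith
  have := (tendsto_pow_atTop_nhds_zero_of_abs_lt_one habs).const_mul p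
  simpa using tendsto_const_nhds.add this

/-- Identifiability of the homogeneous model from zero-report probabilities: if
`(p, q)` and `(p', q')` in `(0,1]²` give the same probability
`1 - p + p (1 - pq)^n` of a zero report for every household size `n ≥ 1`, then
the parameters coincide. -/
theorem zero_report_identifiable (p q p' q' : ℝ)
    (hp : p ∈ Set.Ioc (0 : ℝ) 1) (hq : q ∈ Set.Ioc (0 : ℝ) 1)
    (hp' : p' ∈ Set.Ioc (0 : ℝ) 1) (hq' : q' ∈ Set.Ioc (0 : ℝ) 1)
    (h : ∀ n : ℕ, 1 ≤ n →
      1 - p + p * (1 - p * q) ^ n = 1 - p' + p' * (1 - p' * q') ^ n) :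
    p = p' ∧ q = q' := by
  have t1 := tendsto_aux p q hp hq
  have t2 := tendsto_aux p' q' hp' hq'
  have t1' : Tendsto (fun n : ℕ => 1 - p + p * (1 - p * q) ^ n) atTop (𝓝 (1 - p')) := by
    refine t2.congr' ?_
    filter_upwards [eventually_ge_atTop 1] with n hn
    exact (h n hn).symm
  have hpe : 1 - p = 1 - p' := tendsto_nhds_unique t1 t1'
  have hpp : p = p' := by linarith
  have h1 := h 1 le_rfl
  simp only [pow_one] at h1
  refine ⟨hpp, ?_⟩
  subst hpp
  have hp0 := hp.1
  have h2 : p ^ 2 * q = p ^ 2 * q' := by nlinarith [h1]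
  exact mul_left_cancel₀ (pow_ne_zero 2 hp0.ne') h2
end
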